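/- Let K be a field, n > 1, and a ∈ K[s]^n a nonzero row vector. Suppose u_1,...,u_{n-1} are nonzero elements of syz(a) with deg(u_1) ≤ ... ≤ deg(u_{n-1}) that generate syz(a) as a K[s]-module and whose leading vectors LV(u_1),...,LV(u_{n-1}) are linearly independent over K. Then for any nonzero h_1,...,h_{n-1} ∈ syz(a) with deg(h_1) ≤ ... ≤ deg(h_{n-1}) that generate syz(a) as a K[s]-module, one has deg(u_i) ≤ deg(h_i) for each i = 1,...,n−1. -/

import Mathlib

open Polynomial
open scoped Classical

noncomputable section

/-- The degree of a polynomial vector: the maximum of the degrees of the entries. -/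
def vdeg {K : Type*} [Field K] {n : ℕ} (h : Fin n → K[X]) : ℕ :=
  Finset.univ.sup fun i => (h i).natDegree

/-- The leading vector of a polynomial vector: the vector of coefficients of
`s ^ (vdeg h)` in the entries. -/
def LV {K : Type*} [Field K] {n : ℕ} (h : Fin n → K[X]) : Fin n → K :=
  fun i => (h i).coeff (vdeg h)

/-- The syzygy module of a row vector `a` of polynomials. -/
def syz {K : Type*} [Field K] {n : ℕ} (a : Fin n → K[X]) :
    Submodule K[X] (Fin n → K[X]) where
  carrier := {h | ∑ i, a i * h i = 0}
  add_mem' := by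
    intro x y hx hy
    simp only [Set.mem_setOf_eq] at *
    simp only [Pi.add_apply, mul_add, Finset.sum_add_distrib, hx, hy, add_zero]
  zero_mem' := by simp
  smul_mem' := by
    intro c x hx
    simp only [Set.mem_setOf_eq] at *
    have h1 : ∑ i, a i * (c • x) i = c * ∑ i, a i * x i := by
      rw [Finset.mul_sum]
      refine Finset.sum_congr rfl fun i _ => ?_
      simp only [Pi.smul_apply, smul_eq_mul]
      ring
    rw [h1, hx, mul_zero]

/-- The coefficient matrix `A ∈ K^{(2d+1) × n(d+1)}` associated with a polynomial row
vector `a` of degree at most `d`:  `A_{k+1, i+jn} = c_{k-j,i}` where `c_m` is the vector of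
coefficients of `s^m` in `a` (with `c_m = 0` for `m < 0` or `m > d`). -/
def coefA {K : Type*} [Field K] {n : ℕ} (d : ℕ) (hn : 0 < n) (a : Fin n → K[X]) :
    Matrix (Fin (2*d+1)) (Fin (n*(d+1))) K :=
  Matrix.of fun k ℓ =>
    if (ℓ : ℕ) / n ≤ (k : ℕ) then
      (a ⟨(ℓ : ℕ) % n, Nat.mod_lt _ hn⟩).coeff ((k : ℕ) - (ℓ : ℕ) / n)
    else 0

/-- The `♭` isomorphism `K^{n(d+1)} → K[s]^n`: split `v` into `d+1` consecutive blocks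
`w_0, …, w_d ∈ K^n` and form `∑_j s^j w_j`. -/
def flatv {K : Type*} [Field K] {n : ℕ} (d : ℕ) (v : Fin (n*(d+1)) → K) : Fin n → K[X] :=
  fun i => ∑ j : Fin (d+1), C (v ⟨(i:ℕ) + (j:ℕ)*n, by
    calc (i:ℕ) + (j:ℕ)*n < n + (j:ℕ)*n := Nat.add_lt_add_right i.isLt _
      _ = n * ((j:ℕ)+1) := by ring
      _ ≤ n * (d+1) := Nat.mul_le_mul le_rfl j.isLt⟩) * X ^ (j:ℕ)

/-- The `♭` isomorphism `K^m → K[s]` for scalars. -/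
def flat1 {K : Type*} [Field K] {m : ℕ} (w : Fin m → K) : K[X] :=
  ∑ k : Fin m, C (w k) * X ^ (k:ℕ)

/-- A column index `j` of a matrix is pivotal if the `j`-th column is not a `K`-linear
combination of the columns of smaller index. -/
def Pivotal {K : Type*} [Field K] {m N : ℕ} (A : Matrix (Fin m) (Fin N) K) (j : Fin N) : Prop :=
  (fun k => A k j) ∉ Submodule.span K ((fun r : Fin N => fun k => A k r) '' {r | r < j})

/-- A basic non-pivotal index: the minimal non-pivotal index in its residue class modulo `n`. -/
def BasicNP {K : Type*} [Field K] {m N : ℕ} (n : ℕ) (A : Matrix (Fin m) (Fin N) K)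
    (r : Fin N) : Prop :=
  ¬ Pivotal A r ∧ ∀ r' : Fin N, ¬ Pivotal A r' → (r':ℕ) % n = (r:ℕ) % n → r ≤ r'

/-- `B` encodes, for each non-pivotal index `i`, the row-echelon null vector
`b_i = e_i − v_i`: `(b_i)_i = 1`, `(b_i)_j = −α_j` for pivotal `j < i` where
`A_{*i} = Σ α_j A_{*j}`, and all other entries vanish.  Equivalently, `b_i ∈ ker A`,
`(b_i)_i = 1` and `(b_i)_j = 0` unless `j = i` or `j` is pivotal with `j < i`. -/
def IsEchelonNull {K : Type*} [Field K] {m N : ℕ} (A : Matrix (Fin m) (Fin N) K)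
    (B : Fin N → Fin N → K) : Prop :=
  ∀ i : Fin N, ¬ Pivotal A i →
    A.mulVec (B i) = 0 ∧ B i i = 1 ∧
    ∀ j : Fin N, j ≠ i → ¬ (Pivotal A j ∧ j < i) → B i j = 0

/-- Shift an index by `t`, modulo the size (used only when `j + t` is in range). -/
def shiftIdx {N : ℕ} (j : Fin N) (t : ℕ) : Fin N :=
  ⟨((j:ℕ) + t) % N, Nat.mod_lt _ j.pos⟩
lemma natDegree_le_vdeg {K : Type*} [Field K] {n : ℕ} (g : Fin n → K[X]) (i : Fin n) :
    (g i).natDegree ≤ vdeg g :=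
  Finset.le_sup (f := fun i => (g i).natDegree) (Finset.mem_univ i)

/-- Key leading-coefficient lemma. -/
lemma key_coeff {K : Type*} [Field K] {n m : ℕ}
    (u : Fin m → Fin n → K[X])
    (hLV : LinearIndependent K fun i => LV (u i))
    (p : Fin m → K[X]) (hp : p ≠ 0) :
    ∃ idx : Fin n, ((∑ k, p k • u k) idx).coeff
      ((Finset.univ.filter (fun k => p k ≠ 0)).sup fun k => (p k).natDegree + vdeg (u k)) ≠ 0 := by
  classical
  set F := Finset.univ.filter (fun k => p k ≠ 0) with hF
  have hFne : F.Nonempty := by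
    rcases Function.ne_iff.mp hp with ⟨k, hk⟩
    exact ⟨k, Finset.mem_filter.mpr ⟨Finset.mem_univ _, by simpa using hk⟩⟩
  set D := F.sup (fun k => (p k).natDegree + vdeg (u k)) with hD
  obtain ⟨k₀, hk₀F, hk₀⟩ := Finset.exists_mem_eq_sup F hFne (fun k => (p k).natDegree + vdeg (u k))
  set c : Fin m → K := fun k =>
    if (p k).natDegree + vdeg (u k) = D ∧ p k ≠ 0 then (p k).leadingCoeff else 0 with hc
  have hcoeff : ∀ idx, ((∑ k, p k • u k) idx).coeff D = ∑ k, c k * (LV (u k)) idx := by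
    intro idx
    have h1 : (∑ k, p k • u k) idx = ∑ k, p k * u k idx := by
      simp [Finset.sum_apply]
    rw [h1, Polynomial.finset_sum_coeff]
    refine Finset.sum_congr rfl fun k _ => ?_
    by_cases hpk : p k = 0
    · simp only [hc, hpk]
      simp
    · have hle : (p k).natDegree + vdeg (u k) ≤ D :=
        Finset.le_sup (f := fun k => (p k).natDegree + vdeg (u k)) (s := F)
          (Finset.mem_filter.mpr ⟨Finset.mem_univ _, hpk⟩)
      by_cases heq : (p k).natDegree + vdeg (u k) = D
      · rw [← heq, Polynomial.coeff_mul_add_eq_of_natDegree_le le_rfl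
          (natDegree_le_vdeg (u k) idx)]
        have hck : c k = (p k).leadingCoeff := by
          simp only [hc]
          rw [if_pos ⟨heq, hpk⟩]
        rw [hck]
        rfl
      · have hlt : (p k * u k idx).natDegree < D := by
          have h2 : (p k * u k idx).natDegree ≤ (p k).natDegree + (u k idx).natDegree :=
            Polynomial.natDegree_mul_le
          have h3 : (u k idx).natDegree ≤ vdeg (u k) := natDegree_le_vdeg (u k) idx
          omega
        rw [Polynomial.coeff_eq_zero_of_natDegree_lt hlt]
        simp [hc, heq]
  have hpk₀ : p k₀ ≠ 0 := by simpa [F] using hk₀F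
  have hck₀ : c k₀ = (p k₀).leadingCoeff := by simp [hc, hk₀.symm, hpk₀, hD]
  by_contra hcon
  push_neg at hcon
  have hzero : ∑ k, c k • LV (u k) = 0 := by
    funext idx
    have := hcon idx
    rw [hcoeff idx] at this
    simpa [Finset.sum_apply] using this
  have := Fintype.linearIndependent_iff.mp hLV c hzero k₀
  rw [hck₀] at this
  exact hpk₀ (Polynomial.leadingCoeff_eq_zero.mp this)

/-- Degree consequence: each `u k` appearing in a representation has degree `≤` that of the sum. -/
lemma vdeg_le_of_rep {K : Type*} [Field K] {n m : ℕ}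
    (u : Fin m → Fin n → K[X])
    (hLV : LinearIndependent K fun i => LV (u i))
    (p : Fin m → K[X]) (k : Fin m) (hk : p k ≠ 0) :
    vdeg (u k) ≤ vdeg (∑ j, p j • u j) := by
  classical
  have hp : p ≠ 0 := fun hz => hk (by rw [hz]; rfl)
  obtain ⟨idx, hidx⟩ := key_coeff u hLV p hp
  set D := (Finset.univ.filter (fun k => p k ≠ 0)).sup fun k => (p k).natDegree + vdeg (u k) with hD
  have h1 : vdeg (u k) ≤ D := by
    rw [hD]
    exact le_trans (Nat.le_add_left _ _)
      (Finset.le_sup (f := fun k => (p k).natDegree + vdeg (u k))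
        (Finset.mem_filter.mpr ⟨Finset.mem_univ _, hk⟩))
  have h2 : D ≤ ((∑ j, p j • u j) idx).natDegree := Polynomial.le_natDegree_of_ne_zero hidx
  have h3 : ((∑ j, p j • u j) idx).natDegree ≤ vdeg (∑ j, p j • u j) :=
    natDegree_le_vdeg _ idx
  omega

lemma u_li {K : Type*} [Field K] {n m : ℕ}
    (u : Fin m → Fin n → K[X])
    (hLV : LinearIndependent K fun i => LV (u i)) :
    LinearIndependent K[X] u := by
  rw [Fintype.linearIndependent_iff]
  intro g hg k
  by_contra hgk
  have hp : g ≠ 0 := fun hz => hgk (by rw [hz]; rfl)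
  obtain ⟨idx, hidx⟩ := key_coeff u hLV g hp
  rw [hg] at hidx
  simp at hidx

/-- minimality of the degrees.  If `u_1, …, u_{n-1}` are nonzero syzygies,
sorted by degree, that generate `syz a` and whose leading vectors are `K`-linearly
independent, then for any sorted nonzero generating family `h_1, …, h_{n-1}` of `syz a`
one has `deg u_i ≤ deg h_i` for each `i`. -/
theorem mu_basis_minimal_degrees {K : Type*} [Field K] {n : ℕ} (hn : 1 < n)
    (a : Fin n → K[X]) (ha : a ≠ 0)
    (u : Fin (n-1) → Fin n → K[X]) (hu0 : ∀ i, u i ≠ 0)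
    (humem : ∀ i, u i ∈ syz a)
    (humono : Monotone fun i => vdeg (u i))
    (huspan : Submodule.span K[X] (Set.range u) = syz a)
    (hLV : LinearIndependent K fun i => LV (u i))
    (h : Fin (n-1) → Fin n → K[X]) (hh0 : ∀ i, h i ≠ 0)
    (hhmem : ∀ i, h i ∈ syz a)
    (hhmono : Monotone fun i => vdeg (h i))
    (hhspan : Submodule.span K[X] (Set.range h) = syz a) :
    ∀ i, vdeg (u i) ≤ vdeg (h i) := by
  by_contra hcon
  push_neg at hcon
  obtain ⟨i, hi⟩ := hcon
  classical
  set T : Finset (Fin n → K[X]) :=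
    ((Finset.univ.filter (· < i)).image u) ∪ ((Finset.univ.filter (i < ·)).image h) with hT
  have hsub : ∀ j, h j ∈ Submodule.span K[X] (T : Set (Fin n → K[X])) := by
    intro j
    rcases lt_or_ge i j with hij | hij
    · refine Submodule.subset_span ?_
      rw [hT]
      simp only [Finset.coe_union, Set.mem_union, Finset.coe_image, Set.mem_image,
        Finset.mem_coe, Finset.mem_filter, Finset.mem_univ, true_and]
      exact Or.inr ⟨j, hij, rfl⟩
    · have hmem : h j ∈ Submodule.span K[X] (Set.range u) := by
        rw [huspan]; exact hhmem j
      obtain ⟨p, hp⟩ := (Submodule.mem_span_range_iff_exists_fun K[X]).mp hmem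
      rw [← hp]
      refine Submodule.sum_mem _ fun k _ => ?_
      by_cases hpk : p k = 0
      · simp [hpk]
      · have hk_lt : k < i := by
          by_contra hki
          push_neg at hki
          have h1 : vdeg (u k) ≤ vdeg (h j) := by
            rw [← hp]; exact vdeg_le_of_rep u hLV p k hpk
          have h2 : vdeg (h j) ≤ vdeg (h i) := hhmono hij
          have h3 : vdeg (u i) ≤ vdeg (u k) := humono hki
          omega
        refine Submodule.smul_mem _ _ (Submodule.subset_span ?_)
        rw [hT]
        simp only [Finset.coe_union, Set.mem_union, Finset.coe_image, Set.mem_image,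
          Finset.mem_coe, Finset.mem_filter, Finset.mem_univ, true_and]
        exact Or.inl ⟨k, hk_lt, rfl⟩
  have hspanle : syz a ≤ Submodule.span K[X] (T : Set (Fin n → K[X])) := by
    rw [← hhspan, Submodule.span_le]
    rintro x ⟨j, rfl⟩
    exact hsub j
  have humemT : ∀ k, u k ∈ Submodule.span K[X] (T : Set (Fin n → K[X])) :=
    fun k => hspanle (humem k)
  have hli : LinearIndependent K[X] u := u_li u hLV
  have hli2 : LinearIndependent K[X]
      (fun k => (⟨u k, humemT k⟩ : Submodule.span K[X] (T : Set (Fin n → K[X])))) :=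
    LinearIndependent.of_comp (Submodule.span K[X] (T : Set (Fin n → K[X]))).subtype hli
  have hr1 := hli2.cardinal_lift_le_rank
  have hr2 := rank_span_finset_le (R := K[X]) T
  have hcard : (n - 1 : ℕ) ≤ T.card := by
    have := hr1.trans (Cardinal.lift_le.mpr hr2)
    rw [Cardinal.mk_fin, Cardinal.lift_natCast, Cardinal.lift_natCast, Nat.cast_le] at this
    exact this
  have hTcard : T.card ≤ (n - 1) - 1 := by
    have hdisj : Disjoint (Finset.univ.filter (· < i)) (Finset.univ.filter (i < ·)) := by
      rw [Finset.disjoint_left]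
      intro x hx1 hx2
      simp only [Finset.mem_filter, Finset.mem_univ, true_and] at hx1 hx2
      exact absurd hx2 (not_lt_of_gt hx1)
    calc T.card ≤ ((Finset.univ.filter (· < i)).image u).card
          + ((Finset.univ.filter (i < ·)).image h).card := Finset.card_union_le _ _
      _ ≤ (Finset.univ.filter (· < i)).card + (Finset.univ.filter (i < ·)).card :=
          add_le_add Finset.card_image_le Finset.card_image_le
      _ = ((Finset.univ.filter (· < i)) ∪ (Finset.univ.filter (i < ·))).card :=
          (Finset.card_union_of_disjoint hdisj).symm
      _ ≤ (Finset.univ.erase i).card := by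
          refine Finset.card_le_card ?_
          intro x hx
          simp only [Finset.mem_union, Finset.mem_filter, Finset.mem_univ, true_and] at hx
          refine Finset.mem_erase.mpr ⟨?_, Finset.mem_univ x⟩
          rcases hx with hx | hx
          · exact ne_of_lt hx
          · exact ne_of_gt hx
      _ = (n - 1) - 1 := by
          rw [Finset.card_erase_of_mem (Finset.mem_univ i), Finset.card_univ, Fintype.card_fin]
  omega
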